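/- arXiv:1201.6211 — 3 statements merged into one kernel-verified Lean document; each statement's English description precedes it below -/
import Mathlib

section
/- Suppose a = (1, -a_1, -a_2, …) satisfies Σ_{j≥1} (1+j)^r |a_j| < ∞ and the power series A(z) = 1 - Σ_{j=1}^∞ a_j z^j has no zeros in the closed unit disk {|z| ≤ 1}. Then there exists a sequence (α_j)_{j≥1} with Σ_{j≥1} (1+j)^r |α_j| < ∞ such that (1 - Σ_{j≥1} a_j z^j)^{-1} = 1 + Σ_{j≥1} α_j z^j for all |z| ≤ 1. -/
open Filter Topology PowerSeries Finset

set_option synthInstance.maxHeartbeats 1000000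
set_option maxHeartbeats 1000000
namespace WWL

noncomputable def wt (r : ℝ) (n : ℕ) : ℝ := (1 + n : ℝ) ^ r

lemma one_le_base (n : ℕ) : (1 : ℝ) ≤ 1 + n := le_add_of_nonneg_right (Nat.cast_nonneg n)

lemma one_le_wt {r : ℝ} (hr : 0 ≤ r) (n : ℕ) : 1 ≤ wt r n :=
  Real.one_le_rpow (one_le_base n) hr

lemma wt_pos {r : ℝ} (hr : 0 ≤ r) (n : ℕ) : 0 < wt r n :=
  lt_of_lt_of_le one_pos (one_le_wt hr n)

lemma wt_nonneg {r : ℝ} (n : ℕ) : 0 ≤ wt r n :=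
  Real.rpow_nonneg (by positivity) r

lemma wt_zero {r : ℝ} : wt r 0 = 1 := by simp [wt]

lemma wt_add_le {r : ℝ} (hr : 0 ≤ r) (m n : ℕ) : wt r (m + n) ≤ wt r m * wt r n := by
  rw [wt, wt, wt, ← Real.mul_rpow (by positivity) (by positivity)]
  apply Real.rpow_le_rpow (by positivity) _ hr
  push_cast
  nlinarith [Nat.cast_nonneg (α := ℝ) m, Nat.cast_nonneg (α := ℝ) n]

def wset (r : ℝ) : Set (PowerSeries ℂ) :=
  {f | Summable fun n => wt r n * ‖coeff n f‖}

lemma key_mul_bound {r : ℝ} (hr : 0 ≤ r) (f g : PowerSeries ℂ) (n : ℕ) :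
    wt r n * ‖coeff n (f * g)‖ ≤
      ∑ kl ∈ antidiagonal n,
        (wt r kl.1 * ‖coeff kl.1 f‖) * (wt r kl.2 * ‖coeff kl.2 g‖) := by
  rw [coeff_mul]
  calc wt r n * ‖∑ kl ∈ antidiagonal n, coeff kl.1 f * coeff kl.2 g‖
      ≤ wt r n * ∑ kl ∈ antidiagonal n, ‖coeff kl.1 f * coeff kl.2 g‖ :=
        mul_le_mul_of_nonneg_left (norm_sum_le _ _) (wt_nonneg n)
    _ = ∑ kl ∈ antidiagonal n, wt r n * ‖coeff kl.1 f * coeff kl.2 g‖ := by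
        rw [mul_sum]
    _ ≤ _ := by
        apply sum_le_sum
        intro p hp
        have hpn : p.1 + p.2 = n := mem_antidiagonal.mp hp
        rw [norm_mul]
        calc wt r n * (‖coeff p.1 f‖ * ‖coeff p.2 g‖)
            ≤ (wt r p.1 * wt r p.2) * (‖coeff p.1 f‖ * ‖coeff p.2 g‖) :=
              mul_le_mul_of_nonneg_right (by rw [← hpn]; exact wt_add_le hr p.1 p.2)
                (mul_nonneg (norm_nonneg _) (norm_nonneg _))
          _ = _ := by ring

lemma summable_cauchy {r : ℝ} (hr : 0 ≤ r) {f g : PowerSeries ℂ}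
    (hf : f ∈ wset r) (hg : g ∈ wset r) :
    Summable fun n => ∑ kl ∈ antidiagonal n,
      (wt r kl.1 * ‖coeff kl.1 f‖) * (wt r kl.2 * ‖coeff kl.2 g‖) := by
  have H := summable_norm_sum_mul_antidiagonal_of_summable_norm
    (f := fun n => wt r n * ‖coeff n f‖) (g := fun n => wt r n * ‖coeff n g‖)
    (by simpa only [Real.norm_eq_abs] using hf.abs)
    (by simpa only [Real.norm_eq_abs] using hg.abs)
  apply H.congr
  intro n
  rw [Real.norm_eq_abs, abs_of_nonneg]
  exact sum_nonneg fun p _ => mul_nonneg (mul_nonneg (wt_nonneg _) (norm_nonneg _))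
    (mul_nonneg (wt_nonneg _) (norm_nonneg _))

lemma mul_mem_wset {r : ℝ} (hr : 0 ≤ r) {f g : PowerSeries ℂ}
    (hf : f ∈ wset r) (hg : g ∈ wset r) : f * g ∈ wset r := by
  apply Summable.of_nonneg_of_le (fun n => mul_nonneg (wt_nonneg _) (norm_nonneg _))
    (fun n => key_mul_bound hr f g n) (summable_cauchy hr hf hg)

noncomputable def wAlg (r : ℝ) (hr : 0 ≤ r) : Subalgebra ℂ (PowerSeries ℂ) where
  carrier := wset r
  add_mem' := by
    intro f g hf hg
    have hf' : Summable fun n => wt r n * ‖coeff n f‖ := hf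
    have hg' : Summable fun n => wt r n * ‖coeff n g‖ := hg
    show Summable fun n => wt r n * ‖coeff n (f + g)‖
    apply Summable.of_nonneg_of_le (f := fun n => wt r n * ‖coeff n f‖ + wt r n * ‖coeff n g‖)
      (fun n => mul_nonneg (wt_nonneg _) (norm_nonneg _)) _ (hf'.add hg')
    intro n
    simp only [map_add, ← mul_add]
    exact mul_le_mul_of_nonneg_left (norm_add_le _ _) (wt_nonneg n)
  mul_mem' := fun hf hg => mul_mem_wset hr hf hg
  algebraMap_mem' := by
    intro z
    show Summable fun n => wt r n * ‖coeff n ((algebraMap ℂ (PowerSeries ℂ)) z)‖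
    apply summable_of_ne_finset_zero (s := {0})
    intro n hn
    simp only [mem_singleton] at hn
    have : (coeff n) ((algebraMap ℂ (PowerSeries ℂ)) z) = 0 := by
      simp [PowerSeries.algebraMap_apply, PowerSeries.coeff_C, hn]
    rw [this]; simp


variable (r : ℝ) [hrF : Fact (0 ≤ r)]

lemma hr0 : (0 : ℝ) ≤ r := Fact.out

noncomputable abbrev W := wAlg r (hr0 r)

variable {r}

lemma wsummable (f : W r) :
    Summable fun n => wt r n * ‖coeff n (f : PowerSeries ℂ)‖ := f.2

noncomputable instance : NormedAddCommGroup (W r) :=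
  AddGroupNorm.toNormedAddCommGroup
    { toFun := fun f => ∑' n, wt r n * ‖coeff n (f : PowerSeries ℂ)‖
      map_zero' := by simp
      add_le' := by
        intro f g
        have h1 : Summable fun n => wt r n * ‖coeff n ((f : PowerSeries ℂ))‖ := f.2
        have h2 : Summable fun n => wt r n * ‖coeff n ((g : PowerSeries ℂ))‖ := g.2
        calc (∑' n, wt r n * ‖coeff n ((f + g : W r) : PowerSeries ℂ)‖)
            ≤ ∑' n, (wt r n * ‖coeff n (f : PowerSeries ℂ)‖
                + wt r n * ‖coeff n (g : PowerSeries ℂ)‖) := by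
              apply Summable.tsum_le_tsum _ (wsummable (f + g)) (h1.add h2)
              intro n
              push_cast
              simp only [map_add, ← mul_add]
              exact mul_le_mul_of_nonneg_left (norm_add_le _ _) (wt_nonneg n)
          _ = _ := Summable.tsum_add h1 h2
      neg' := by
        intro f
        congr 1
        funext n
        push_cast
        simp
      eq_zero_of_map_eq_zero' := by
        intro f hf
        have hnn : ∀ n, 0 ≤ wt r n * ‖coeff n (f : PowerSeries ℂ)‖ :=
          fun n => mul_nonneg (wt_nonneg _) (norm_nonneg _)
        have : ∀ n, wt r n * ‖coeff n (f : PowerSeries ℂ)‖ = 0 := by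
          intro n
          have hle := Summable.le_tsum (wsummable f) n (fun i _ => hnn i)
          have := hnn n
          linarith [hle.trans_eq hf]
        apply Subtype.ext
        apply PowerSeries.ext
        intro n
        have h := this n
        have hw := wt_pos (hr0 r) n
        have : ‖coeff n (f : PowerSeries ℂ)‖ = 0 := by
          rcases mul_eq_zero.mp h with h' | h'
          · exact absurd h' hw.ne'
          · exact h'
        simpa using this }

lemma wnorm_def (f : W r) : ‖f‖ = ∑' n, wt r n * ‖coeff n (f : PowerSeries ℂ)‖ := rfl

lemma coeff_norm_le (f : W r) (n : ℕ) : wt r n * ‖coeff n (f : PowerSeries ℂ)‖ ≤ ‖f‖ :=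
  Summable.le_tsum (wsummable f) n (fun i _ => mul_nonneg (wt_nonneg _) (norm_nonneg _))

lemma coeff_le_norm (f : W r) (n : ℕ) : ‖coeff n (f : PowerSeries ℂ)‖ ≤ ‖f‖ := by
  have h := coeff_norm_le f n
  have h2 : 1 * ‖coeff n (f : PowerSeries ℂ)‖ ≤ wt r n * ‖coeff n (f : PowerSeries ℂ)‖ :=
    mul_le_mul_of_nonneg_right (one_le_wt (hr0 r) n) (norm_nonneg _)
  linarith

noncomputable instance : NormedCommRing (W r) :=
  { (inferInstance : NormedAddCommGroup (W r)), (inferInstance : CommRing (W r)) with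
    dist_eq := fun f g => rfl
    norm_mul_le := by
      intro f g
      have hf : (f : PowerSeries ℂ) ∈ wset r := f.2
      have hg : (g : PowerSeries ℂ) ∈ wset r := g.2
      have hc : ((f * g : W r) : PowerSeries ℂ) = (f : PowerSeries ℂ) * g := rfl
      rw [wnorm_def, wnorm_def, wnorm_def]
      calc (∑' n, wt r n * ‖coeff n ((f * g : W r) : PowerSeries ℂ)‖)
          ≤ ∑' n, ∑ kl ∈ antidiagonal n,
              (wt r kl.1 * ‖coeff kl.1 (f : PowerSeries ℂ)‖) *
              (wt r kl.2 * ‖coeff kl.2 (g : PowerSeries ℂ)‖) := by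
            apply Summable.tsum_le_tsum _ (wsummable (f * g)) (summable_cauchy (hr0 r) hf hg)
            intro n
            rw [hc]
            exact key_mul_bound (hr0 r) _ _ n
        _ = _ := by
            have h1 : Summable fun n => ‖wt r n * ‖coeff n (f : PowerSeries ℂ)‖‖ := by
              simpa only [Real.norm_eq_abs] using (wsummable f).abs
            have h2 : Summable fun n => ‖wt r n * ‖coeff n (g : PowerSeries ℂ)‖‖ := by
              simpa only [Real.norm_eq_abs] using (wsummable g).abs
            exact (tsum_mul_tsum_eq_tsum_sum_antidiagonal_of_summable_norm h1 h2).symm }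

noncomputable instance : NormedAlgebra ℂ (W r) :=
  { (inferInstance : Algebra ℂ (W r)) with
    norm_smul_le := by
      intro z f
      rw [wnorm_def, wnorm_def]
      rw [← tsum_mul_left]
      apply le_of_eq
      congr 1
      funext n
      have : ((z • f : W r) : PowerSeries ℂ) = z • (f : PowerSeries ℂ) := rfl
      rw [this, map_smul, smul_eq_mul, norm_mul]
      ring }

instance : NormOneClass (W r) := by
  constructor
  rw [wnorm_def]
  have hco : ∀ n, (coeff n) ((1 : W r) : PowerSeries ℂ) = if n = 0 then 1 else 0 := by
    intro n
    have : ((1 : W r) : PowerSeries ℂ) = 1 := rfl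
    rw [this, PowerSeries.coeff_one]
  rw [tsum_eq_single 0]
  · simp [hco, wt_zero]
  · intro n hn
    simp [hco, hn]

variable {r : ℝ} [hrF : Fact (0 ≤ r)]

noncomputable instance : CompleteSpace (W r) := by
  apply Metric.complete_of_cauchySeq_tendsto
  intro u hu
  have hdist : ∀ k l : ℕ, ∀ n : ℕ,
      dist (coeff n ((u k : PowerSeries ℂ))) (coeff n ((u l : PowerSeries ℂ)))
        ≤ dist (u k) (u l) := by
    intro k l n
    rw [dist_eq_norm, dist_eq_norm, ← map_sub]
    have : (u k : PowerSeries ℂ) - (u l : PowerSeries ℂ) = ((u k - u l : W r) : PowerSeries ℂ) := rfl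
    rw [this]
    exact coeff_le_norm (u k - u l) n
  have hcs : ∀ n : ℕ, CauchySeq fun k => coeff n ((u k : PowerSeries ℂ)) := by
    intro n
    rw [Metric.cauchySeq_iff] at hu ⊢
    intro ε hε
    obtain ⟨N, hN⟩ := hu ε hε
    exact ⟨N, fun k hk l hl => lt_of_le_of_lt (hdist k l n) (hN k hk l hl)⟩
  have hlim : ∀ n : ℕ, ∃ z : ℂ, Tendsto (fun k => coeff n ((u k : PowerSeries ℂ))) atTop (𝓝 z) :=
    fun n => cauchySeq_tendsto_of_complete (hcs n)
  choose c hc using hlim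
  -- the key uniform estimate
  have key : ∀ ε : ℝ, 0 < ε → ∃ N : ℕ, ∀ k, N ≤ k → ∀ s : Finset ℕ,
      ∑ n ∈ s, wt r n * ‖coeff n ((u k : PowerSeries ℂ)) - c n‖ ≤ ε := by
    intro ε hε
    obtain ⟨N, hN⟩ := Metric.cauchySeq_iff.mp hu ε hε
    refine ⟨N, fun k hk s => ?_⟩
    have htend : Tendsto (fun l => ∑ n ∈ s, wt r n *
        ‖coeff n ((u k : PowerSeries ℂ)) - coeff n ((u l : PowerSeries ℂ))‖) atTop
        (𝓝 (∑ n ∈ s, wt r n * ‖coeff n ((u k : PowerSeries ℂ)) - c n‖)) := by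
      apply tendsto_finset_sum
      intro n _
      exact (((hc n).const_sub _).norm).const_mul _
    apply le_of_tendsto htend
    filter_upwards [eventually_ge_atTop N] with l hl
    have hsum : ∀ n : ℕ, coeff n ((u k : PowerSeries ℂ)) - coeff n ((u l : PowerSeries ℂ))
        = coeff n (((u k - u l : W r)) : PowerSeries ℂ) := by
      intro n
      rw [← map_sub]
      rfl
    calc ∑ n ∈ s, wt r n * ‖coeff n ((u k : PowerSeries ℂ)) - coeff n ((u l : PowerSeries ℂ))‖
        = ∑ n ∈ s, wt r n * ‖coeff n (((u k - u l : W r)) : PowerSeries ℂ)‖ := by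
          simp_rw [hsum]
      _ ≤ ‖u k - u l‖ := Summable.sum_le_tsum s (fun n _ => mul_nonneg (wt_nonneg _) (norm_nonneg _))
          (wsummable (u k - u l))
      _ ≤ ε := le_of_lt (by rw [← dist_eq_norm]; exact hN k hk l hl)
  -- construct the limit
  obtain ⟨N₁, hN₁⟩ := key 1 one_pos
  have hdmem : (↑(u N₁) : PowerSeries ℂ) - PowerSeries.mk c ∈ wAlg r (hr0 r) := by
    show Summable fun n => wt r n * ‖coeff n ((↑(u N₁) : PowerSeries ℂ) - PowerSeries.mk c)‖
    apply summable_of_sum_le (c := 1) (fun n => mul_nonneg (wt_nonneg _) (norm_nonneg _))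
    intro s
    calc ∑ n ∈ s, wt r n * ‖coeff n ((↑(u N₁) : PowerSeries ℂ) - PowerSeries.mk c)‖
        = ∑ n ∈ s, wt r n * ‖coeff n ((u N₁ : PowerSeries ℂ)) - c n‖ := by
          apply Finset.sum_congr rfl
          intro n _
          rw [map_sub, PowerSeries.coeff_mk]
      _ ≤ 1 := hN₁ N₁ le_rfl s
  have hFmem : PowerSeries.mk c ∈ wAlg r (hr0 r) := by
    have h2 := sub_mem (u N₁).2 hdmem
    simpa using h2
  set F : W r := ⟨PowerSeries.mk c, hFmem⟩ with hF
  refine ⟨F, ?_⟩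
  rw [Metric.tendsto_atTop]
  intro ε hε
  obtain ⟨N, hN⟩ := key (ε / 2) (by linarith)
  refine ⟨N, fun k hk => ?_⟩
  have hcoeffdiff : ∀ n, coeff n (((u k - F : W r)) : PowerSeries ℂ)
      = coeff n ((u k : PowerSeries ℂ)) - c n := by
    intro n
    have : ((u k - F : W r) : PowerSeries ℂ) = (u k : PowerSeries ℂ) - PowerSeries.mk c := rfl
    rw [this, map_sub, PowerSeries.coeff_mk]
  have : dist (u k) F ≤ ε / 2 := by
    rw [dist_eq_norm, wnorm_def]
    apply Summable.tsum_le_of_sum_le (wsummable (u k - F))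
    intro s
    calc ∑ n ∈ s, wt r n * ‖coeff n (((u k - F : W r)) : PowerSeries ℂ)‖
        = ∑ n ∈ s, wt r n * ‖coeff n ((u k : PowerSeries ℂ)) - c n‖ := by
          apply Finset.sum_congr rfl
          intro n _
          rw [hcoeffdiff]
      _ ≤ ε / 2 := hN k hk s
  linarith
variable {r : ℝ} [hrF : Fact (0 ≤ r)]

noncomputable def coeffCLM (n : ℕ) : W r →L[ℂ] ℂ :=
  LinearMap.mkContinuous
    ((PowerSeries.coeff n).comp ((wAlg r (hr0 r)).val.toLinearMap)) 1
    (fun f => by simpa using coeff_le_norm f n)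

lemma coeffCLM_apply (n : ℕ) (f : W r) :
    coeffCLM n f = coeff n (f : PowerSeries ℂ) := rfl

lemma X_mem : (PowerSeries.X : PowerSeries ℂ) ∈ wAlg r (hr0 r) := by
  show Summable fun n => wt r n * ‖coeff n (PowerSeries.X : PowerSeries ℂ)‖
  apply summable_of_ne_finset_zero (s := {1})
  intro n hn
  simp only [mem_singleton] at hn
  rw [PowerSeries.coeff_X]
  simp [hn]

noncomputable def Xp : W r := ⟨PowerSeries.X, X_mem⟩

lemma norm_Xp_pow (n : ℕ) : ‖(Xp ^ n : W r)‖ = wt r n := by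
  rw [wnorm_def]
  have hc : ((Xp ^ n : W r) : PowerSeries ℂ) = PowerSeries.X ^ n := rfl
  rw [tsum_eq_single n]
  · rw [hc, PowerSeries.coeff_X_pow]
    simp
  · intro m hm
    rw [hc, PowerSeries.coeff_X_pow]
    simp [hm]

lemma abs_char_X_le_one (φ : WeakDual.characterSpace ℂ (W r)) : ‖φ (Xp : W r)‖ ≤ 1 := by
  by_contra hcon
  push_neg at hcon
  set t := ‖φ (Xp : W r)‖ with ht
  have ht1 : 1 < t := hcon
  have ht0 : 0 < t := lt_trans one_pos ht1
  have hb : ∀ n : ℕ, t ^ n ≤ wt r n := by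
    intro n
    have h1 : φ ((Xp : W r) ^ n) ∈ spectrum ℂ ((Xp : W r) ^ n) :=
      AlgHom.apply_mem_spectrum (WeakDual.CharacterSpace.toAlgHom φ) _
    have h2 := spectrum.norm_le_norm_of_mem h1
    rw [norm_Xp_pow] at h2
    rw [map_pow, norm_pow] at h2
    exact h2
  have hblog : 0 < Real.log t := Real.log_pos ht1
  have hlim0 : Tendsto (fun x : ℝ => x ^ r * Real.exp (-Real.log t * x)) atTop (𝓝 0) :=
    tendsto_rpow_mul_exp_neg_mul_atTop_nhds_zero r (Real.log t) hblog
  have hxc : Tendsto (fun n : ℕ => (1 : ℝ) + n) atTop atTop := by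
    apply tendsto_atTop_add_const_left
    exact tendsto_natCast_atTop_atTop
  have hlim1 : Tendsto (fun n : ℕ => ((1 : ℝ) + n) ^ r *
      Real.exp (-Real.log t * ((1 : ℝ) + n))) atTop (𝓝 0) := hlim0.comp hxc
  have hlim2 : Tendsto (fun n : ℕ => t * (((1 : ℝ) + n) ^ r *
      Real.exp (-Real.log t * ((1 : ℝ) + n)))) atTop (𝓝 0) := by
    simpa using hlim1.const_mul t
  have heq : ∀ n : ℕ, t * (((1 : ℝ) + n) ^ r * Real.exp (-Real.log t * ((1 : ℝ) + n)))
      = wt r n / t ^ n := by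
    intro n
    have hexp : Real.exp (-Real.log t * ((1 : ℝ) + n))
        = Real.exp (-Real.log t) * Real.exp (-Real.log t * n) := by
      rw [← Real.exp_add]
      ring_nf
    have h3 : Real.exp (-Real.log t) = t⁻¹ := by
      rw [Real.exp_neg, Real.exp_log ht0]
    have h4 : Real.exp (-Real.log t * n) = (t ^ n)⁻¹ := by
      rw [show -Real.log t * (n : ℝ) = (n : ℝ) * (-Real.log t) by ring,
        Real.exp_nat_mul, Real.exp_neg, Real.exp_log ht0, inv_pow]
    rw [hexp, h3, h4, wt]
    field_simp
  rw [tendsto_congr heq] at hlim2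
  have hge : ∀ n : ℕ, (1 : ℝ) ≤ wt r n / t ^ n := by
    intro n
    rw [le_div_iff₀ (pow_pos ht0 n)]
    simpa using hb n
  have : (0 : ℝ) < 1 := one_pos
  have hle := le_of_tendsto_of_tendsto' tendsto_const_nhds hlim2 hge
  linarith

lemma summable_eval (f : W r) {z : ℂ} (hz : ‖z‖ ≤ 1) :
    Summable fun n => coeff n (f : PowerSeries ℂ) * z ^ n := by
  apply Summable.of_norm
  apply Summable.of_nonneg_of_le (fun n => norm_nonneg _) _ (wsummable f)
  intro n
  rw [norm_mul, norm_pow]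
  calc ‖coeff n (f : PowerSeries ℂ)‖ * ‖z‖ ^ n
      ≤ ‖coeff n (f : PowerSeries ℂ)‖ * 1 :=
        mul_le_mul_of_nonneg_left (pow_le_one₀ (norm_nonneg z) hz) (norm_nonneg _)
    _ = 1 * ‖coeff n (f : PowerSeries ℂ)‖ := by ring
    _ ≤ wt r n * ‖coeff n (f : PowerSeries ℂ)‖ :=
        mul_le_mul_of_nonneg_right (one_le_wt (hr0 r) n) (norm_nonneg _)

lemma summable_eval_norm (f : W r) {z : ℂ} (hz : ‖z‖ ≤ 1) :
    Summable fun n => ‖coeff n (f : PowerSeries ℂ) * z ^ n‖ := by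
  apply Summable.of_nonneg_of_le (fun n => norm_nonneg _) _ (wsummable f)
  intro n
  rw [norm_mul, norm_pow]
  calc ‖coeff n (f : PowerSeries ℂ)‖ * ‖z‖ ^ n
      ≤ ‖coeff n (f : PowerSeries ℂ)‖ * 1 :=
        mul_le_mul_of_nonneg_left (pow_le_one₀ (norm_nonneg z) hz) (norm_nonneg _)
    _ = 1 * ‖coeff n (f : PowerSeries ℂ)‖ := by ring
    _ ≤ wt r n * ‖coeff n (f : PowerSeries ℂ)‖ :=
        mul_le_mul_of_nonneg_right (one_le_wt (hr0 r) n) (norm_nonneg _)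

lemma eval_mul (f g : W r) {z : ℂ} (hz : ‖z‖ ≤ 1) :
    (∑' n, coeff n ((f * g : W r) : PowerSeries ℂ) * z ^ n)
      = (∑' n, coeff n (f : PowerSeries ℂ) * z ^ n)
        * (∑' n, coeff n (g : PowerSeries ℂ) * z ^ n) := by
  rw [tsum_mul_tsum_eq_tsum_sum_antidiagonal_of_summable_norm
    (summable_eval_norm f hz) (summable_eval_norm g hz)]
  apply tsum_congr
  intro n
  have hc : ((f * g : W r) : PowerSeries ℂ) = (f : PowerSeries ℂ) * g := rfl
  rw [hc, coeff_mul, sum_mul]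
  apply Finset.sum_congr rfl
  intro p hp
  have hpn : p.1 + p.2 = n := mem_antidiagonal.mp hp
  rw [← hpn, pow_add]
  ring

end WWL

open WWL Finset PowerSeries in
/-- Weighted Wiener lemma: if `A(z) = 1 - ∑_{j≥1} a_j z^j` has weighted-summable
coefficients and no zeros in the closed unit disk, then `1/A(z) = 1 + ∑_{j≥1} α_j z^j`
with weighted-summable coefficients `α_j`.  (Here `a j` stands for `a_{j+1}`.) -/
theorem weighted_wiener_lemma (r : ℝ) (hr : 0 ≤ r) (a : ℕ → ℂ)
    (ha : Summable fun j : ℕ => ((1 : ℝ) + (j + 1)) ^ r * ‖a j‖)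
    (hA : ∀ z : ℂ, ‖z‖ ≤ 1 → (1 - ∑' j : ℕ, a j * z ^ (j + 1)) ≠ 0) :
    ∃ α : ℕ → ℂ,
      (Summable fun j : ℕ => ((1 : ℝ) + (j + 1)) ^ r * ‖α j‖) ∧
      ∀ z : ℂ, ‖z‖ ≤ 1 →
        (1 - ∑' j : ℕ, a j * z ^ (j + 1))⁻¹ = 1 + ∑' j : ℕ, α j * z ^ (j + 1) := by
  haveI : Fact (0 ≤ r) := ⟨hr⟩
  classical
  have hterm : Summable fun j : ℕ => a j • (Xp ^ (j + 1) : W r) := by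
    apply Summable.of_norm
    have heq : ∀ j : ℕ, ‖a j • (Xp ^ (j + 1) : W r)‖ = ((1 : ℝ) + (↑j + 1)) ^ r * ‖a j‖ := by
      intro j
      rw [norm_smul, norm_Xp_pow, wt]
      push_cast
      ring
    exact (summable_congr heq).mpr ha
  set s : W r := ∑' j : ℕ, a j • (Xp ^ (j + 1) : W r) with hs
  set b : W r := 1 - s with hb
  have hcs : ∀ n : ℕ, coeffCLM n s = ∑' j : ℕ, a j * (if n = j + 1 then 1 else 0) := by
    intro n
    rw [hs, ContinuousLinearMap.map_tsum _ hterm]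
    apply tsum_congr
    intro j
    rw [map_smul, smul_eq_mul]
    congr 1
    have h1 : coeffCLM n (Xp ^ (j + 1) : W r)
        = coeff n ((PowerSeries.X : PowerSeries ℂ) ^ (j + 1)) := rfl
    rw [h1, PowerSeries.coeff_X_pow]
  have hone : ∀ n : ℕ, coeffCLM n (1 : W r) = if n = 0 then 1 else 0 := by
    intro n
    rw [coeffCLM_apply]
    have : ((1 : W r) : PowerSeries ℂ) = 1 := rfl
    rw [this, PowerSeries.coeff_one]
  have hc0 : coeffCLM 0 b = 1 := by
    rw [hb, map_sub, hcs, hone]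
    have hz : ∀ j : ℕ, a j * (if 0 = j + 1 then (1 : ℂ) else 0) = 0 := by
      intro j; simp
    rw [tsum_congr hz, tsum_zero]
    simp
  have hcsucc : ∀ m : ℕ, coeffCLM (m + 1) b = -a m := by
    intro m
    rw [hb, map_sub, hcs, hone]
    rw [tsum_eq_single m]
    · simp
    · intro j hj
      have : m + 1 ≠ j + 1 := by omega
      simp [this, Ne.symm hj]
  have hbu : IsUnit b := by
    by_contra hnb
    obtain ⟨φ, hφ⟩ := WeakDual.CharacterSpace.exists_apply_eq_zero hnb
    set z₀ : ℂ := φ (Xp : W r) with hz₀def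
    have hz₀ : ‖z₀‖ ≤ 1 := abs_char_X_le_one φ
    have hφs : φ s = ∑' j : ℕ, a j * z₀ ^ (j + 1) := by
      rw [hs]
      have h3 : φ (∑' j : ℕ, a j • (Xp ^ (j + 1) : W r))
          = ∑' j : ℕ, φ (a j • (Xp ^ (j + 1) : W r)) :=
        ContinuousLinearMap.map_tsum ((φ : WeakDual ℂ (W r)) : W r →L[ℂ] ℂ) hterm
      rw [h3]
      apply tsum_congr
      intro j
      rw [map_smul, smul_eq_mul, map_pow]
    have hφb : φ b = 1 - ∑' j : ℕ, a j * z₀ ^ (j + 1) := by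
      rw [hb, map_sub, map_one, hφs]
    rw [hφ] at hφb
    exact hA z₀ hz₀ hφb.symm
  obtain ⟨v, hv⟩ := hbu
  set c : W r := ((v⁻¹ : (W r)ˣ) : W r) with hcdef
  have hbc : b * c = 1 := by rw [← hv, hcdef]; exact v.mul_inv
  refine ⟨fun j => coeffCLM (j + 1) c, ?_, ?_⟩
  · have h := wsummable c
    have h2 := (summable_nat_add_iff (f := fun n => wt r n * ‖coeff n (c : PowerSeries ℂ)‖) 1).mpr h
    apply h2.congr
    intro j
    simp only [coeffCLM_apply, wt]
    push_cast
    ring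
  · intro z hz
    have hbz : (∑' n : ℕ, coeff n (b : PowerSeries ℂ) * z ^ n)
        = 1 - ∑' j : ℕ, a j * z ^ (j + 1) := by
      rw [Summable.tsum_eq_zero_add (summable_eval b hz)]
      have e0 : coeff 0 (b : PowerSeries ℂ) * z ^ 0 = 1 := by
        rw [← coeffCLM_apply, hc0]; simp
      have esucc : ∀ j : ℕ, coeff (j + 1) (b : PowerSeries ℂ) * z ^ (j + 1)
          = -(a j * z ^ (j + 1)) := by
        intro j
        rw [← coeffCLM_apply, hcsucc]; ring
      rw [e0, tsum_congr esucc, tsum_neg]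
      ring
    have hc0c : coeff 0 (c : PowerSeries ℂ) = 1 := by
      have h1 : coeff 0 ((b * c : W r) : PowerSeries ℂ) = 1 := by
        rw [hbc]
        have : ((1 : W r) : PowerSeries ℂ) = 1 := rfl
        rw [this, PowerSeries.coeff_one]
        simp
      have h2 : ((b * c : W r) : PowerSeries ℂ) = (b : PowerSeries ℂ) * c := rfl
      rw [h2] at h1
      rw [PowerSeries.coeff_zero_eq_constantCoeff, map_mul] at h1
      have h3 : constantCoeff (b : PowerSeries ℂ) = 1 := by
        rw [← PowerSeries.coeff_zero_eq_constantCoeff, ← coeffCLM_apply, hc0]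
      rw [h3, one_mul] at h1
      rw [PowerSeries.coeff_zero_eq_constantCoeff]
      exact h1
    have hcz : (∑' n : ℕ, coeff n (c : PowerSeries ℂ) * z ^ n)
        = 1 + ∑' j : ℕ, coeffCLM (j + 1) c * z ^ (j + 1) := by
      rw [Summable.tsum_eq_zero_add (summable_eval c hz)]
      rw [hc0c]
      simp only [pow_zero, one_mul, coeffCLM_apply]
    have honez : (∑' n : ℕ, coeff n ((1 : W r) : PowerSeries ℂ) * z ^ n) = 1 := by
      rw [tsum_eq_single 0]
      · have : ((1 : W r) : PowerSeries ℂ) = 1 := rfl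
        rw [this, PowerSeries.coeff_one]; simp
      · intro n hn
        have : ((1 : W r) : PowerSeries ℂ) = 1 := rfl
        rw [this, PowerSeries.coeff_one]; simp [hn]
    have hmul := eval_mul b c hz
    rw [hbz, hcz, hbc, honez] at hmul
    exact inv_eq_of_mul_eq_one_right hmul.symm
end

section
/- Let A_p(z) = 1 - Σ_{k=1}^p a_k(p) z^k and Â_p(z) = 1 - Σ_{k=1}^p â_k(p) z^k be polynomials with no zeros in the closed disk of radius 1 + 1/p, and let δ > 0 be a lower bound for |A_p(z) Â_p(z)| on the circle |z| = 1 + 1/p. Then the Taylor coefficients of the reciprocals satisfy |α̂_k(p) - α_k(p)| ≤ (1+1/p)^{-k} · δ^{-1} · (1+1/p)^p · Σ_{j=1}^p |â_j(p) - a_j(p)| for all k ≥ 0. -/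
open Finset

set_option maxHeartbeats 1600000 in
/-- Comparison of Taylor coefficients of reciprocals of two polynomials without zeros
in the closed disk of radius `1 + 1/p`: if `δ > 0` bounds `|A_p(z) Â_p(z)|` from below
on the circle `|z| = 1 + 1/p`, then
`|α̂_k(p) - α_k(p)| ≤ (1+1/p)^{-k} · δ⁻¹ · (1+1/p)^p · ∑_{j=1}^p |â_j(p) - a_j(p)|`. -/
theorem inverse_coefficients_difference_bound (p : ℕ) (hp : 1 ≤ p)
    (a ahat : ℕ → ℂ) (A Ahat : ℂ → ℂ)
    (hA : ∀ z : ℂ, A z = 1 - ∑ k ∈ Finset.Icc 1 p, a k * z ^ k)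
    (hAhat : ∀ z : ℂ, Ahat z = 1 - ∑ k ∈ Finset.Icc 1 p, ahat k * z ^ k)
    (hAne : ∀ z : ℂ, ‖z‖ ≤ 1 + 1 / (p : ℝ) → A z ≠ 0)
    (hAhatne : ∀ z : ℂ, ‖z‖ ≤ 1 + 1 / (p : ℝ) → Ahat z ≠ 0)
    (δ : ℝ) (hδ : 0 < δ)
    (hδle : ∀ z : ℂ, ‖z‖ = 1 + 1 / (p : ℝ) → δ ≤ ‖A z * Ahat z‖)
    (α αhat : ℕ → ℂ)
    (hαsum : ∀ z : ℂ, ‖z‖ ≤ 1 + 1 / (p : ℝ) →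
      HasSum (fun j : ℕ => α j * z ^ j) (A z)⁻¹)
    (hαhatsum : ∀ z : ℂ, ‖z‖ ≤ 1 + 1 / (p : ℝ) →
      HasSum (fun j : ℕ => αhat j * z ^ j) (Ahat z)⁻¹) :
    ∀ k : ℕ, ‖αhat k - α k‖ ≤
      (1 + 1 / (p : ℝ)) ^ (-(k : ℤ)) * δ⁻¹ * (1 + 1 / (p : ℝ)) ^ p *
        ∑ j ∈ Finset.Icc 1 p, ‖ahat j - a j‖ := by
  intro k
  have hp0 : (0 : ℝ) < p := by exact_mod_cast Nat.lt_of_lt_of_le Nat.zero_lt_one hp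
  set r : ℝ := 1 + 1 / (p : ℝ) with hrdef
  have hr1 : (1 : ℝ) < r := by
    have : 0 < 1 / (p : ℝ) := by positivity
    simp only [hrdef]; linarith
  have hr0 : (0 : ℝ) < r := lt_trans one_pos hr1
  set R : NNReal := ⟨r, hr0.le⟩ with hRdef
  have hRr : (R : ℝ) = r := rfl
  set S : ℝ := ∑ j ∈ Finset.Icc 1 p, ‖ahat j - a j‖ with hSdef
  have hS0 : 0 ≤ S := Finset.sum_nonneg fun j _ => norm_nonneg _
  set M : ℝ := δ⁻¹ * r ^ p * S with hMdef
  have hM0 : 0 ≤ M := by positivity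
  set g : ℂ → ℂ := fun z => (Ahat z)⁻¹ - (A z)⁻¹ with hgdef
  -- A, Ahat are differentiable
  have hAfun : A = fun z => 1 - ∑ k ∈ Finset.Icc 1 p, a k * z ^ k := funext hA
  have hAhatfun : Ahat = fun z => 1 - ∑ k ∈ Finset.Icc 1 p, ahat k * z ^ k := funext hAhat
  have hAdiff : Differentiable ℂ A := by
    rw [hAfun]
    exact (differentiable_const _).sub <| Differentiable.fun_sum fun i _ =>
      (differentiable_const _).mul (differentiable_pow i)
  have hAhatdiff : Differentiable ℂ Ahat := by
    rw [hAhatfun]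
    exact (differentiable_const _).sub <| Differentiable.fun_sum fun i _ =>
      (differentiable_const _).mul (differentiable_pow i)
  -- g is differentiable on the closed ball of radius r
  have hgdiff : DifferentiableOn ℂ g (Metric.closedBall (0 : ℂ) R) := by
    apply DifferentiableOn.sub
    · exact DifferentiableOn.inv hAhatdiff.differentiableOn fun z hz =>
        hAhatne z (by simpa [mem_closedBall_zero_iff, hRr] using hz)
    · exact DifferentiableOn.inv hAdiff.differentiableOn fun z hz =>
        hAne z (by simpa [mem_closedBall_zero_iff, hRr] using hz)
  have hRpos : 0 < R := by
    rw [← NNReal.coe_lt_coe]; exact hr0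
  have hgball : HasFPowerSeriesOnBall g (cauchyPowerSeries g 0 R) 0 R :=
    hgdiff.hasFPowerSeriesOnBall hRpos
  -- the series with coefficients αhat - α sums to g on the closed ball
  set c : ℕ → ℂ := fun n => αhat n - α n with hcdef
  have hsum : ∀ z : ℂ, ‖z‖ ≤ r → HasSum (fun n => c n * z ^ n) (g z) := by
    intro z hz
    simpa [hcdef, sub_mul] using (hαhatsum z hz).sub (hαsum z hz)
  -- radius of the series is at least r
  have hnorm_oS : ∀ n, ‖FormalMultilinearSeries.ofScalars ℂ c n‖ * (R : ℝ) ^ n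
      = ‖c n * (r : ℂ) ^ n‖ := by
    intro n
    rw [FormalMultilinearSeries.ofScalars_norm]
    simp [hRr, norm_mul, abs_of_nonneg hr0.le]
  have hradius : (R : ENNReal) ≤ (FormalMultilinearSeries.ofScalars ℂ c).radius := by
    apply FormalMultilinearSeries.le_radius_of_tendsto _ (l := 0)
    have := (hsum (r : ℂ) (by simp [Complex.norm_real, abs_of_nonneg hr0.le])).summable.tendsto_atTop_zero
    have hnorm := this.norm
    simp only [norm_zero] at hnorm
    exact Filter.Tendsto.congr (fun n => (hnorm_oS n).symm) hnorm
  have hq : HasFPowerSeriesOnBall g (FormalMultilinearSeries.ofScalars ℂ c) 0 R :=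
    { r_le := hradius
      r_pos := by exact_mod_cast hRpos
      hasSum := by
        intro y hy
        have hy' : ‖y‖ ≤ r := by
          rw [EMetric.mem_ball, edist_zero_right] at hy
          have h2 : ‖y‖₊ ≤ R := by exact_mod_cast hy.le
          exact_mod_cast h2
        have hco : ∀ n, (FormalMultilinearSeries.ofScalars ℂ c).coeff n = c n := by
          intro n
          show (FormalMultilinearSeries.ofScalars ℂ c n fun _ => (1 : ℂ)) = c n
          rw [FormalMultilinearSeries.ofScalars_apply_eq]; simp
        rw [zero_add]
        simp only [FormalMultilinearSeries.apply_eq_pow_smul_coeff, hco, smul_eq_mul]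
        simpa [mul_comm] using hsum y hy' }
  have heq : FormalMultilinearSeries.ofScalars ℂ c = cauchyPowerSeries g 0 R :=
    hq.hasFPowerSeriesAt.eq_formalMultilinearSeries hgball.hasFPowerSeriesAt
  -- the coefficient equals c k
  have hco : ∀ n, (FormalMultilinearSeries.ofScalars ℂ c).coeff n = c n := by
    intro n
    show (FormalMultilinearSeries.ofScalars ℂ c n fun _ => (1 : ℂ)) = c n
    rw [FormalMultilinearSeries.ofScalars_apply_eq]; simp
  have hck : ‖c k‖ = ‖cauchyPowerSeries g 0 R k‖ := by
    rw [← heq, FormalMultilinearSeries.norm_apply_eq_norm_coef, hco]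
  -- bound for g on the circle
  have hgbound : ∀ z : ℂ, ‖z‖ = r → ‖g z‖ ≤ M := by
    intro z hz
    have hzle : ‖z‖ ≤ r := le_of_eq hz
    have hAz : A z ≠ 0 := hAne z hzle
    have hAhatz : Ahat z ≠ 0 := hAhatne z hzle
    have hgz : g z = (A z - Ahat z) / (A z * Ahat z) := by
      simp only [hgdef]
      field_simp
    have hdiff : A z - Ahat z = ∑ j ∈ Finset.Icc 1 p, (ahat j - a j) * z ^ j := by
      have hsplit : ∑ j ∈ Finset.Icc 1 p, (ahat j - a j) * z ^ j
          = (∑ j ∈ Finset.Icc 1 p, ahat j * z ^ j) - ∑ j ∈ Finset.Icc 1 p, a j * z ^ j := by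
        rw [← Finset.sum_sub_distrib]
        exact Finset.sum_congr rfl fun j _ => sub_mul _ _ _
      rw [hA, hAhat, hsplit]; ring
    have hnum : ‖A z - Ahat z‖ ≤ r ^ p * S := by
      rw [hdiff]
      calc ‖∑ j ∈ Finset.Icc 1 p, (ahat j - a j) * z ^ j‖
          ≤ ∑ j ∈ Finset.Icc 1 p, ‖(ahat j - a j) * z ^ j‖ := norm_sum_le _ _
        _ ≤ ∑ j ∈ Finset.Icc 1 p, ‖ahat j - a j‖ * r ^ p := by
            apply Finset.sum_le_sum
            intro j hj
            rw [norm_mul, norm_pow, hz]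
            exact mul_le_mul_of_nonneg_left
              (pow_le_pow_right₀ hr1.le (Finset.mem_Icc.mp hj).2) (norm_nonneg _)
        _ = r ^ p * S := by rw [hSdef, ← Finset.sum_mul]; ring
    have hden : δ ≤ ‖A z * Ahat z‖ := hδle z hz
    rw [hgz, norm_div]
    calc ‖A z - Ahat z‖ / ‖A z * Ahat z‖
        ≤ (r ^ p * S) / δ :=
          div_le_div₀ (mul_nonneg (pow_nonneg hr0.le p) hS0) hnum hδ hden
      _ = M := by rw [hMdef, div_eq_mul_inv]; ring
  -- continuity of g on the circle for integrability
  have hnorm_circ : ∀ θ : ℝ, ‖circleMap 0 R θ‖ = r := by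
    intro θ
    rw [norm_circleMap_zero, hRr, abs_of_nonneg hr0.le]
  have hc1 : Continuous fun θ : ℝ => (Ahat (circleMap 0 R θ))⁻¹ :=
    Continuous.inv₀ (hAhatdiff.continuous.comp (continuous_circleMap 0 R))
      fun θ => hAhatne _ (le_of_eq (hnorm_circ θ))
  have hc2 : Continuous fun θ : ℝ => (A (circleMap 0 R θ))⁻¹ :=
    Continuous.inv₀ (hAdiff.continuous.comp (continuous_circleMap 0 R))
      fun θ => hAne _ (le_of_eq (hnorm_circ θ))
  have hcont : Continuous fun θ : ℝ => g (circleMap 0 R θ) := hc1.sub hc2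
  -- bound the integral
  have hint : (∫ θ : ℝ in (0)..2 * Real.pi, ‖g (circleMap 0 R θ)‖) ≤ 2 * Real.pi * M := by
    have h1 : (∫ θ : ℝ in (0)..2 * Real.pi, ‖g (circleMap 0 R θ)‖)
        ≤ ∫ _ : ℝ in (0)..2 * Real.pi, M := by
      apply intervalIntegral.integral_mono_on Real.two_pi_pos.le
      · exact (hcont.norm).intervalIntegrable _ _
      · exact intervalIntegrable_const
      · intro θ _
        exact hgbound _ (hnorm_circ θ)
    calc (∫ θ : ℝ in (0)..2 * Real.pi, ‖g (circleMap 0 R θ)‖)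
        ≤ ∫ _ : ℝ in (0)..2 * Real.pi, M := h1
      _ = 2 * Real.pi * M := by rw [intervalIntegral.integral_const, sub_zero, smul_eq_mul]
  -- put everything together
  have hkey : ‖c k‖ ≤ M * (r⁻¹) ^ k := by
    rw [hck]
    calc ‖cauchyPowerSeries g 0 R k‖
        ≤ ((2 * Real.pi)⁻¹ * ∫ θ : ℝ in (0)..2 * Real.pi, ‖g (circleMap 0 R θ)‖)
            * |(R : ℝ)|⁻¹ ^ k := norm_cauchyPowerSeries_le g 0 R k
      _ ≤ ((2 * Real.pi)⁻¹ * (2 * Real.pi * M)) * |(R : ℝ)|⁻¹ ^ k := by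
          apply mul_le_mul_of_nonneg_right _ (by positivity)
          exact mul_le_mul_of_nonneg_left hint (by positivity)
      _ = M * (r⁻¹) ^ k := by
          rw [hRr, abs_of_nonneg hr0.le]
          rw [← mul_assoc, inv_mul_cancel₀ (by positivity : (2 * Real.pi) ≠ 0), one_mul]
  calc ‖αhat k - α k‖ = ‖c k‖ := rfl
    _ ≤ M * (r⁻¹) ^ k := hkey
    _ = r ^ (-(k : ℤ)) * δ⁻¹ * r ^ p * S := by
        rw [zpow_neg, zpow_natCast, ← inv_pow, hMdef]; ring
    _ = (1 + 1 / (p : ℝ)) ^ (-(k : ℤ)) * δ⁻¹ * (1 + 1 / (p : ℝ)) ^ p *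
        ∑ j ∈ Finset.Icc 1 p, ‖ahat j - a j‖ := rfl
end

section
/- Let z_k be complex numbers with 1 < |z_k| ≤ 1 + 1/p(k) where p(k) → ∞, and suppose z_k → z_0 (necessarily |z_0| = 1). Let (a_j) satisfy Σ_j |a_j| < ∞ and Σ_{j=1}^{p} |a_j(p) - a_j| → 0 as p → ∞. If A_{p(k)}(z_k) → 0, then A(z_0) = 0, where A_p(z) = 1 - Σ_{j=1}^p a_j(p) z^j and A(z) = 1 - Σ_{j=1}^∞ a_j z^j. -/
open Filter Finset

private lemma pow_le_three {n : ℕ} (hn : 1 ≤ n) {r : ℝ} (hr0 : 0 ≤ r)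
    (hr : r ≤ 1 + 1 / (n : ℝ)) {j : ℕ} (hj : j + 1 ≤ n) : r ^ (j + 1) ≤ 3 := by
  have hn0 : (0:ℝ) < n := by exact_mod_cast hn
  have h1 : (1:ℝ) ≤ 1 + 1 / n := by
    have : (0:ℝ) ≤ 1/n := by positivity
    linarith
  calc r ^ (j + 1) ≤ (1 + 1/(n:ℝ)) ^ (j + 1) := pow_le_pow_left₀ hr0 hr _
    _ ≤ (1 + 1/(n:ℝ)) ^ n := pow_le_pow_right₀ h1 hj
    _ ≤ (Real.exp (1/n)) ^ n := by
        apply pow_le_pow_left₀ (by positivity)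
        have := Real.add_one_le_exp (1/(n:ℝ))
        linarith
    _ = Real.exp 1 := by
        rw [← Real.exp_nat_mul]
        congr 1
        field_simp
    _ ≤ 3 := by linarith [Real.exp_one_lt_d9]

/-- Key limiting argument of Lemma 3: if `1 < |z_k| ≤ 1 + 1/p(k)`, `p(k) → ∞`,
`z_k → z_0`, the coefficients satisfy `∑ |a_j| < ∞` and
`∑_{j=1}^p |a_j(p) - a_j| → 0`, and `A_{p(k)}(z_k) → 0`, then `A(z_0) = 0`.
(Here `a j` stands for `a_{j+1}`, and `ap p j` for `a_{j+1}(p)`.) -/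
theorem limit_point_is_zero_of_A
    (a : ℕ → ℂ) (ap : ℕ → ℕ → ℂ)
    (ha : Summable fun j : ℕ => ‖a j‖)
    (hconv : Tendsto (fun p : ℕ => ∑ j ∈ Finset.range p, ‖ap p j - a j‖) atTop (nhds 0))
    (p : ℕ → ℕ) (hp : Tendsto p atTop atTop)
    (z : ℕ → ℂ) (z0 : ℂ)
    (hz1 : ∀ k, 1 < ‖z k‖) (hz2 : ∀ k, ‖z k‖ ≤ 1 + 1 / (p k : ℝ))
    (hzconv : Tendsto z atTop (nhds z0))
    (hApz : Tendsto
      (fun k : ℕ => 1 - ∑ j ∈ Finset.range (p k), ap (p k) j * (z k) ^ (j + 1))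
      atTop (nhds 0)) :
    1 - ∑' j : ℕ, a j * z0 ^ (j + 1) = 0 := by
  -- p k ≥ 1 for all k
  have hp1 : ∀ k, 1 ≤ p k := by
    intro k
    by_contra h
    push_neg at h
    interval_cases hpk : p k
    have := hz2 k
    rw [hpk] at this
    simp only [Nat.cast_zero, div_zero, add_zero] at this
    exact absurd (hz1 k) (not_lt.mpr this)
  have hbound : ∀ k, ∀ j < p k, ‖(z k) ^ (j + 1)‖ ≤ 3 := by
    intro k j hj
    rw [norm_pow]
    exact pow_le_three (hp1 k) (norm_nonneg _) (hz2 k) hj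
  -- the difference term tends to 0
  have hD : Tendsto (fun k => ∑ j ∈ Finset.range (p k), (ap (p k) j - a j) * (z k) ^ (j + 1))
      atTop (nhds 0) := by
    have hb : ∀ k, ‖∑ j ∈ Finset.range (p k), (ap (p k) j - a j) * (z k) ^ (j + 1)‖
        ≤ 3 * ∑ j ∈ Finset.range (p k), ‖ap (p k) j - a j‖ := by
      intro k
      calc ‖∑ j ∈ Finset.range (p k), (ap (p k) j - a j) * (z k) ^ (j + 1)‖
          ≤ ∑ j ∈ Finset.range (p k), ‖(ap (p k) j - a j) * (z k) ^ (j + 1)‖ :=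
            norm_sum_le _ _
        _ ≤ ∑ j ∈ Finset.range (p k), ‖ap (p k) j - a j‖ * 3 := by
            apply Finset.sum_le_sum
            intro j hj
            rw [norm_mul]
            exact mul_le_mul_of_nonneg_left (hbound k j (Finset.mem_range.mp hj))
              (norm_nonneg _)
        _ = 3 * ∑ j ∈ Finset.range (p k), ‖ap (p k) j - a j‖ := by
            rw [← Finset.sum_mul]; ring
    have htail : Tendsto (fun k => 3 * ∑ j ∈ Finset.range (p k), ‖ap (p k) j - a j‖)
        atTop (nhds 0) := by
      have := (hconv.comp hp).const_mul (3:ℝ)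
      simpa using this
    rw [tendsto_zero_iff_norm_tendsto_zero]
    exact squeeze_zero (fun k => norm_nonneg _) hb htail
  -- the main term tends to the tsum, by dominated convergence
  have hG : Tendsto (fun k => ∑ j ∈ Finset.range (p k), a j * (z k) ^ (j + 1))
      atTop (nhds (∑' j : ℕ, a j * z0 ^ (j + 1))) := by
    have key : Tendsto (fun k => ∑' j : ℕ,
        (if j < p k then a j * (z k) ^ (j + 1) else 0)) atTop
        (nhds (∑' j : ℕ, a j * z0 ^ (j + 1))) := by
      apply tendsto_tsum_of_dominated_convergence (bound := fun j => 3 * ‖a j‖)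
        (ha.mul_left 3)
      · intro j
        have hev : ∀ᶠ k in atTop, (if j < p k then a j * (z k) ^ (j + 1) else 0)
            = a j * (z k) ^ (j + 1) := by
          filter_upwards [hp.eventually_gt_atTop j] with k hk
          simp [hk]
        have : Tendsto (fun k => a j * (z k) ^ (j + 1)) atTop
            (nhds (a j * z0 ^ (j + 1))) :=
          (tendsto_const_nhds.mul (hzconv.pow (j + 1)))
        exact this.congr' (hev.mono fun k h => h.symm)
      · filter_upwards with k j
        by_cases h : j < p k
        · simp only [h, if_true, norm_mul]
          calc ‖a j‖ * ‖(z k) ^ (j+1)‖ ≤ ‖a j‖ * 3 :=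
              mul_le_mul_of_nonneg_left (hbound k j h) (norm_nonneg _)
            _ = 3 * ‖a j‖ := by ring
        · simp only [h, if_false, norm_zero]
          positivity
    have heq : ∀ k, (∑' j : ℕ, (if j < p k then a j * (z k) ^ (j + 1) else 0))
        = ∑ j ∈ Finset.range (p k), a j * (z k) ^ (j + 1) := by
      intro k
      rw [tsum_eq_sum (s := Finset.range (p k))]
      · apply Finset.sum_congr rfl
        intro j hj
        simp [Finset.mem_range.mp hj]
      · intro j hj
        simp [Nat.not_lt.mp (by simpa using Finset.mem_range.not.mp hj)]
    exact key.congr heq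
  -- combine
  have hcomb : Tendsto
      (fun k : ℕ => 1 - ∑ j ∈ Finset.range (p k), ap (p k) j * (z k) ^ (j + 1))
      atTop (nhds (1 - ∑' j : ℕ, a j * z0 ^ (j + 1))) := by
    have hsum : Tendsto (fun k => ∑ j ∈ Finset.range (p k), ap (p k) j * (z k) ^ (j + 1))
        atTop (nhds (∑' j : ℕ, a j * z0 ^ (j + 1))) := by
      have : (fun k => ∑ j ∈ Finset.range (p k), ap (p k) j * (z k) ^ (j + 1))
          = fun k => (∑ j ∈ Finset.range (p k), (ap (p k) j - a j) * (z k) ^ (j + 1))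
            + ∑ j ∈ Finset.range (p k), a j * (z k) ^ (j + 1) := by
        funext k
        rw [← Finset.sum_add_distrib]
        apply Finset.sum_congr rfl
        intros; ring
      rw [this]
      simpa using hD.add hG
    exact tendsto_const_nhds.sub hsum
  exact tendsto_nhds_unique hcomb hApz
end
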